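/- Let t ∈ ℕ, let b₁, …, b_t be nonzero integers, and let α₁, …, α_t be pairwise distinct natural numbers. For n ∈ ℕ₀ define the integers uₙ = b₁α₁ⁿ + ⋯ + b_tα_tⁿ and vₙ = Σ_{r=0}^{n} (n!/r!)·u_r. For k, n ∈ ℕ₀ define vₙ(k) to be the coefficient of Xⁿ in the formal power series (∏_{j=1}^{t}(1 − α_jX))^k · Σ_{n≥0} vₙXⁿ. Then for all k, n ∈ ℕ₀ with n ≥ t·k, the integer vₙ(k) is divisible by k!. -/

import Mathlib

open Polynomial PowerSeries Finset

noncomputable section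

/-- single-variable sequence gₙ = Σ_{r≤n} (n!/r!) aʳ -/
def gseq (a : ℤ) (n : ℕ) : ℤ :=
  ∑ r ∈ Finset.range (n + 1), (n.descFactorial (n - r) : ℤ) * a ^ r

lemma gseq_zero (a : ℤ) : gseq a 0 = 1 := by simp [gseq]

lemma gseq_succ (a : ℤ) (n : ℕ) : gseq a (n + 1) = (n + 1) * gseq a n + a ^ (n + 1) := by
  unfold gseq
  rw [Finset.sum_range_succ, Finset.mul_sum]
  congr 1
  · apply Finset.sum_congr rfl
    intro r hr
    have hr' : r ≤ n := by have := Finset.mem_range.mp hr; omega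
    have h1 : n + 1 - r = (n - r) + 1 := by omega
    rw [h1, Nat.succ_descFactorial_succ]
    push_cast; ring
  · simp

def Wk (a : ℤ) (k : ℕ) : PowerSeries ℤ :=
  ((1 : PowerSeries ℤ) - PowerSeries.C a * PowerSeries.X) ^ k * PowerSeries.mk (gseq a)

/-- ℤ-indexed coefficients of Wk -/
def h (a : ℤ) (k : ℕ) (n : ℤ) : ℤ :=
  if 0 ≤ n then PowerSeries.coeff (R := ℤ) n.toNat (Wk a k) else 0

lemma h_natCast (a : ℤ) (k m : ℕ) : h a k (m : ℤ) = PowerSeries.coeff (R := ℤ) m (Wk a k) := by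
  simp [h]

lemma h_neg (a : ℤ) (k : ℕ) {n : ℤ} (hn : n < 0) : h a k n = 0 := by
  simp [h, not_le.mpr hn]

lemma h_zero (a : ℤ) (m : ℕ) : h a 0 ((m : ℤ)) = gseq a m := by
  simp [h, Wk]

lemma Wk_succ (a : ℤ) (k : ℕ) :
    Wk a (k + 1) = ((1 : PowerSeries ℤ) - PowerSeries.C a * PowerSeries.X) * Wk a k := by
  unfold Wk; ring

lemma h_shift (a : ℤ) (k : ℕ) (n : ℤ) :
    h a (k + 1) n = h a k n - a * h a k (n - 1) := by
  have hmul : Wk a (k + 1)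
      = Wk a k - PowerSeries.C a * (PowerSeries.X * Wk a k) := by
    rw [Wk_succ]; ring
  rcases lt_trichotomy n 0 with hn | hn | hn
  · rw [h_neg a _ hn, h_neg a _ hn, h_neg a _ (by omega)]; ring
  · subst hn
    rw [h_neg a _ (by norm_num : (0:ℤ) - 1 < 0)]
    rw [show (0:ℤ) = ((0:ℕ):ℤ) from rfl, h_natCast, h_natCast, hmul, map_sub,
      PowerSeries.coeff_C_mul]
    simp
  · obtain ⟨m, hm⟩ : ∃ m : ℕ, n = (m : ℤ) + 1 := ⟨(n - 1).toNat, by omega⟩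
    subst hm
    rw [show ((m:ℤ) + 1) = (((m + 1 : ℕ)) : ℤ) from by push_cast; ring,
      show (((m + 1 : ℕ) : ℤ) - 1) = ((m : ℕ) : ℤ) from by push_cast; ring,
      h_natCast, h_natCast, h_natCast, hmul, map_sub, PowerSeries.coeff_C_mul,
      PowerSeries.coeff_succ_X_mul]

lemma key (a : ℤ) :
    ∀ k : ℕ, 1 ≤ k → ∀ n : ℤ, (k : ℤ) ≤ n →
      h a k n = n * h a k (n - 1) + (k : ℤ) * a * h a (k - 1) (n - 2) := by
  intro k
  induction k with
  | zero => omega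
  | succ k ih =>
    intro _ n hn
    simp only [Nat.add_sub_cancel]
    rcases Nat.eq_zero_or_pos k with hk0 | hk1
    · -- base case k + 1 = 1
      subst hk0
      have hn1 : (1 : ℤ) ≤ n := by exact_mod_cast hn
      rcases eq_or_lt_of_le hn1 with h1 | h2
      · -- n = 1
        have G1 : h a 0 (1:ℤ) = gseq a 1 := by exact_mod_cast h_zero a 1
        have G0 : h a 0 (0:ℤ) = gseq a 0 := by exact_mod_cast h_zero a 0
        have E1 : h a (0 + 1) (1:ℤ) = gseq a 1 - a * gseq a 0 := by
          rw [h_shift, show ((1:ℤ) - 1) = (0:ℤ) from by ring, G1, G0]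
        have E0 : h a (0 + 1) (0:ℤ) = gseq a 0 := by
          rw [h_shift, h_neg a _ (by norm_num : (0:ℤ) - 1 < 0), G0]; ring
        have hg1 : gseq a 1 = 1 + a := by
          rw [show (1:ℕ) = 0 + 1 from rfl, gseq_succ, gseq_zero]; push_cast; ring
        rw [← h1, h_neg a _ (by norm_num : (1:ℤ) - 2 < 0), E1,
          show ((1:ℤ) - 1) = (0:ℤ) from by norm_num, E0, hg1, gseq_zero]
        push_cast; ring
      · -- n ≥ 2
        obtain ⟨m, hm⟩ : ∃ m : ℕ, n = (m : ℤ) + 2 := ⟨(n - 2).toNat, by omega⟩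
        subst hm
        rw [show ((m:ℤ) + 2 - 1) = ((m:ℤ) + 1) from by ring,
          show ((m:ℤ) + 2 - 2) = ((m:ℤ)) from by ring]
        have S2 : h a 1 ((m:ℤ) + 2) = h a 0 ((m:ℤ) + 2) - a * h a 0 ((m:ℤ) + 1) := by
          rw [h_shift, show ((m:ℤ) + 2 - 1) = ((m:ℤ) + 1) from by ring]
        have S1 : h a 1 ((m:ℤ) + 1) = h a 0 ((m:ℤ) + 1) - a * h a 0 ((m:ℤ)) := by
          rw [h_shift, show ((m:ℤ) + 1 - 1) = ((m:ℤ)) from by ring]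
        rw [S2, S1,
          show ((m:ℤ) + 2) = (((m + 2 : ℕ)) : ℤ) from by push_cast; ring,
          show ((m:ℤ) + 1) = (((m + 1 : ℕ)) : ℤ) from by push_cast; ring,
          h_zero, h_zero, h_zero,
          show m + 2 = (m + 1) + 1 from rfl, gseq_succ, gseq_succ]
        push_cast; ring
    · -- inductive step, k ≥ 1
      have hk' : k - 1 + 1 = k := by omega
      have hkn : (k : ℤ) ≤ n - 1 := by
        have : ((k:ℤ) + 1) ≤ n := by exact_mod_cast hn
        omega
      have A := ih hk1 n (by omega)
      have B := ih hk1 (n - 1) hkn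
      have S0 := h_shift a k n
      have S1 : h a (k + 1) (n - 1) = h a k (n - 1) - a * h a k (n - 2) := by
        rw [h_shift, show (n - 1 - 1) = n - 2 from by ring]
      have S2 : h a k (n - 2) = h a (k - 1) (n - 2) - a * h a (k - 1) (n - 2 - 1) := by
        conv_lhs => rw [← hk']
        rw [h_shift]
      rw [show (n - 1 - 1) = n - 2 from by ring, show (n - 1 - 2) = n - 2 - 1 from by ring] at B
      rw [S0, S1, A, B, S2]
      push_cast; ring

lemma div (a : ℤ) (k : ℕ) : ∀ n : ℤ, (k : ℤ) ≤ n → (k.factorial : ℤ) ∣ h a k n := by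
  induction k with
  | zero => intro n _; simp
  | succ k ih =>
    have main : ∀ m : ℕ, ((k+1).factorial : ℤ) ∣ h a (k + 1) (((k:ℤ) + 1) + (m : ℤ)) := by
      intro m
      induction m with
      | zero =>
        have K := key a (k + 1) (by omega) ((k:ℤ) + 1) (by push_cast; omega)
        simp only [Nat.add_sub_cancel] at K
        rw [show ((k:ℤ) + 1 - 1) = (k:ℤ) from by ring] at K
        have S : h a (k + 1) ((k:ℤ)) = h a k ((k:ℤ)) - a * h a k ((k:ℤ) - 1) := h_shift a k _
        rw [show (((k:ℤ) + 1) + ((0:ℕ):ℤ)) = (k:ℤ) + 1 from by push_cast; ring, K, S,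
          show ((k:ℤ) + 1 - 2) = (k:ℤ) - 1 from by ring]
        obtain ⟨c, hc⟩ := ih ((k:ℤ)) le_rfl
        refine ⟨c, ?_⟩
        rw [hc, Nat.factorial_succ]
        push_cast; ring
      | succ m ihm =>
        have K := key a (k + 1) (by omega) (((k:ℤ) + 1) + ((m:ℤ) + 1)) (by push_cast; omega)
        simp only [Nat.add_sub_cancel] at K
        rw [show (((k:ℤ) + 1) + ((m + 1 : ℕ):ℤ)) = ((k:ℤ) + 1) + ((m:ℤ) + 1) from by push_cast; ring,
          K, show ((((k:ℤ) + 1) + ((m:ℤ) + 1)) - 1) = ((k:ℤ) + 1) + (m:ℤ) from by ring,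
          show ((((k:ℤ) + 1) + ((m:ℤ) + 1)) - 2) = (k:ℤ) + (m:ℤ) from by ring]
        apply dvd_add
        · exact Dvd.dvd.mul_left (by exact_mod_cast ihm) _
        · obtain ⟨c, hc⟩ := ih ((k:ℤ) + (m:ℤ)) (by omega)
          refine ⟨a * c, ?_⟩
          rw [hc, Nat.factorial_succ]
          push_cast; ring
    intro n hn
    obtain ⟨m, hm⟩ : ∃ m : ℕ, n = ((k:ℤ) + 1) + (m : ℤ) :=
      ⟨(n - (k + 1)).toNat, by push_cast at hn ⊢; omega⟩
    rw [hm]; exact main m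


/-- Divisibility of the coefficients `vₙ(k)` of `(∏ⱼ(1-αⱼX))^k · Σ vₙXⁿ`
by `k!` for `n ≥ t·k`, where `uₙ = Σ bⱼ αⱼⁿ` and `vₙ = Σ_{r≤n} (n!/r!) u_r`. -/
theorem coeff_divisible
    (t : ℕ) (ht : 0 < t)
    (b : Fin t → ℤ) (hb : ∀ j, b j ≠ 0)
    (α : Fin t → ℕ) (hα : Function.Injective α)
    (u v : ℕ → ℤ)
    (hu : ∀ n, u n = ∑ j, b j * (α j : ℤ) ^ n)
    (hv : ∀ n, v n = ∑ r ∈ Finset.range (n + 1), (n.descFactorial (n - r) : ℤ) * u r) :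
    ∀ k n : ℕ, t * k ≤ n →
      (k.factorial : ℤ) ∣
        PowerSeries.coeff (R := ℤ) n
          ((((∏ j, (1 - Polynomial.C (α j : ℤ) * Polynomial.X)) ^ k : Polynomial ℤ) :
            PowerSeries ℤ) * PowerSeries.mk v) := by
  intro k n hn
  have hveq : PowerSeries.mk v
      = ∑ j, PowerSeries.C (b j) * PowerSeries.mk (gseq ((α j : ℤ))) := by
    ext m
    rw [map_sum, PowerSeries.coeff_mk]
    simp only [PowerSeries.coeff_C_mul, PowerSeries.coeff_mk]
    rw [hv]
    simp only [hu, Finset.mul_sum]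
    rw [Finset.sum_comm]
    apply Finset.sum_congr rfl
    intro j _
    rw [gseq, Finset.mul_sum]
    apply Finset.sum_congr rfl
    intro r _
    ring
  rw [hveq, Finset.mul_sum, map_sum]
  apply Finset.dvd_sum
  intro j _
  rw [mul_left_comm, PowerSeries.coeff_C_mul]
  apply Dvd.dvd.mul_left
  -- now work with a single j
  set a : ℤ := ((α j : ℕ) : ℤ) with ha
  set Q : Polynomial ℤ :=
    (∏ i ∈ Finset.univ.erase j, (1 - Polynomial.C ((α i : ℕ) : ℤ) * Polynomial.X)) ^ k with hQ
  have hP : (∏ i, (1 - Polynomial.C ((α i : ℕ) : ℤ) * Polynomial.X))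
      = (1 - Polynomial.C a * Polynomial.X)
        * ∏ i ∈ Finset.univ.erase j, (1 - Polynomial.C ((α i : ℕ) : ℤ) * Polynomial.X) :=
    (Finset.mul_prod_erase Finset.univ _ (Finset.mem_univ j)).symm
  have hsplit :
      ((((∏ i, (1 - Polynomial.C ((α i : ℕ) : ℤ) * Polynomial.X)) ^ k : Polynomial ℤ)) :
        PowerSeries ℤ) * PowerSeries.mk (gseq a)
      = ((Q : Polynomial ℤ) : PowerSeries ℤ) * Wk a k := by
    rw [hP, mul_pow, Polynomial.coe_mul, Polynomial.coe_pow, Polynomial.coe_sub,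
      Polynomial.coe_one, Polynomial.coe_mul, Polynomial.coe_C, Polynomial.coe_X, hQ, Wk]
    ring
  rw [hsplit, PowerSeries.coeff_mul]
  apply Finset.dvd_sum
  intro p hp
  have hpsum : p.1 + p.2 = n := Finset.HasAntidiagonal.mem_antidiagonal.mp hp
  rcases le_or_gt k p.2 with hk2 | hk2
  · apply Dvd.dvd.mul_left
    rw [← h_natCast]
    exact div a k (p.2 : ℤ) (by exact_mod_cast hk2)
  · -- coefficient of Q vanishes
    have hdeg : Q.natDegree ≤ k * (t - 1) := by
      rw [hQ]
      refine (Polynomial.natDegree_pow_le).trans ?_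
      have h1 : (∏ i ∈ Finset.univ.erase j,
          (1 - Polynomial.C ((α i : ℕ) : ℤ) * Polynomial.X)).natDegree ≤ t - 1 := by
        refine (Polynomial.natDegree_prod_le _ _).trans ?_
        calc ∑ i ∈ Finset.univ.erase j,
              (1 - Polynomial.C ((α i : ℕ) : ℤ) * Polynomial.X).natDegree
            ≤ ∑ _i ∈ Finset.univ.erase j, 1 := by
              apply Finset.sum_le_sum
              intro i _
              refine (Polynomial.natDegree_sub_le _ _).trans ?_
              simp only [Polynomial.natDegree_one]
              have := (Polynomial.natDegree_C_mul_le ((α i : ℕ) : ℤ) Polynomial.X).trans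
                (le_of_eq Polynomial.natDegree_X)
              omega
          _ = t - 1 := by
              rw [Finset.sum_const, smul_eq_mul, mul_one,
                Finset.card_erase_of_mem (Finset.mem_univ j), Finset.card_univ, Fintype.card_fin]
      exact Nat.mul_le_mul_left k h1
    have hlt : Q.natDegree < p.1 := by
      have e1 : k * t = k * (t - 1) + k := by
        conv_lhs => rw [← Nat.succ_pred_eq_of_pos ht]
        rw [Nat.mul_succ, Nat.pred_eq_sub_one]
      have e2 : t * k = k * t := Nat.mul_comm t k
      omega
    rw [Polynomial.coeff_coe, Polynomial.coeff_eq_zero_of_natDegree_lt hlt, zero_mul]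
    exact dvd_zero _

end
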